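/- arXiv:2412.12014 — 2 statements merged into one kernel-verified Lean document; each statement's English description precedes it below -/
import Mathlib

section
/- The ε-covering number (with respect to the Euclidean ℓ² norm) of the ℓ¹ ball of radius β in ℝ^d satisfies log N(B_β, ε, ‖·‖₂) ≤ ⌈β²/ε²⌉ · log(2d). -/
open Finset
open scoped RealInnerProductSpace

noncomputable def vecOf (d : ℕ) (β : ℝ) (p : Fin d × Bool) : EuclideanSpace ℝ (Fin d) :=
  (if p.2 then β else -β) • EuclideanSpace.single p.1 (1:ℝ)

lemma vecOf_norm {d : ℕ} {β : ℝ} (hβ : 0 ≤ β) (p : Fin d × Bool) : ‖vecOf d β p‖ = β := by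
  rcases p with ⟨i, b⟩
  cases b <;> simp [vecOf, norm_smul, abs_of_nonneg hβ]

lemma vecOf_inner {d : ℕ} {β : ℝ} (p : Fin d × Bool) (w : EuclideanSpace ℝ (Fin d)) :
    ⟪w, vecOf d β p⟫ = (if p.2 then β else -β) * w p.1 := by
  rcases p with ⟨i, b⟩
  rw [vecOf, real_inner_smul_right, EuclideanSpace.inner_single_right]
  simp [mul_comm]

lemma norm_sq_eq_sum {d : ℕ} (a : EuclideanSpace ℝ (Fin d)) : ‖a‖^2 = ∑ i, a i * a i := by
  rw [EuclideanSpace.norm_sq_eq]; congr 1; funext i; rw [Real.norm_eq_abs, sq_abs, sq]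

lemma maxcoord {d : ℕ} (hd : 0 < d) (β : ℝ) (a : EuclideanSpace ℝ (Fin d))
    (ha : ∑ i, |a i| ≤ β) :
    ∃ i₀ : Fin d, ‖a‖^2 ≤ β * |a i₀| := by
  haveI : Nonempty (Fin d) := ⟨⟨0, hd⟩⟩
  obtain ⟨i₀, -, hi₀⟩ := Finset.univ.exists_max_image (fun i => |a i|) univ_nonempty
  refine ⟨i₀, ?_⟩
  have h0 : 0 ≤ |a i₀| := abs_nonneg _
  calc ‖a‖^2 = ∑ i, a i * a i := norm_sq_eq_sum a
    _ ≤ ∑ i, |a i₀| * |a i| := Finset.sum_le_sum (fun i _ => by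
        have h1 := hi₀ i (mem_univ i)
        have h2 : a i * a i ≤ |a i| * |a i| := by
          rw [← abs_mul_abs_self (a i)]
        nlinarith [abs_nonneg (a i)])
    _ = |a i₀| * ∑ i, |a i| := by rw [Finset.mul_sum]
    _ ≤ |a i₀| * β := by
        have hβ0 : (0:ℝ) ≤ ∑ i, |a i| := Finset.sum_nonneg fun i _ => abs_nonneg _
        nlinarith
    _ = β * |a i₀| := mul_comm _ _

lemma greedy {d : ℕ} (hd : 0 < d) (β : ℝ) (hβ : 0 ≤ β) (a : EuclideanSpace ℝ (Fin d))
    (ha : ∑ i, |a i| ≤ β) :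
    ∀ k : ℕ, ∃ g : ℕ → Fin d × Bool,
      ‖(∑ j ∈ Finset.range k, vecOf d β (g j)) - (k:ℝ) • a‖^2 ≤ k * (β^2 - ‖a‖^2) := by
  haveI : Nonempty (Fin d) := ⟨⟨0, hd⟩⟩
  intro k
  induction k with
  | zero => exact ⟨fun _ => Classical.arbitrary _, by simp⟩
  | succ k ih =>
    obtain ⟨g, hg⟩ := ih
    set S := ∑ j ∈ Finset.range k, vecOf d β (g j) with hS
    set u : EuclideanSpace ℝ (Fin d) := S - (k:ℝ) • a with hu
    set w : EuclideanSpace ℝ (Fin d) := u - a with hw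
    -- choose coordinate with maximal |w i|
    obtain ⟨i₀, -, hi₀⟩ := Finset.univ.exists_max_image (fun i => |w i|) univ_nonempty
    set b : Bool := decide (w i₀ ≤ 0) with hb
    set p : Fin d × Bool := (i₀, b) with hp
    -- key inequality: ⟪w, vecOf p⟫ ≤ ⟪w, a⟫
    have hkey : ⟪w, vecOf d β p⟫ ≤ ⟪w, a⟫ := by
      have h1 : ⟪w, vecOf d β p⟫ = -(β * |w i₀|) := by
        rw [vecOf_inner]
        simp only [hp, hb, decide_eq_true_eq]
        rcases le_or_gt (w i₀) 0 with h | h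
        · rw [if_pos h, abs_of_nonpos h]; ring
        · rw [if_neg (not_le.2 h), abs_of_pos h]; ring
      have h2 : -(β * |w i₀|) ≤ ⟪w, a⟫ := by
        have : ⟪w, a⟫ = ∑ i, w i * a i := by simp [PiLp.inner_apply, mul_comm]
        rw [this]
        have hineq : ∀ i ∈ Finset.univ, -(|w i₀| * |a i|) ≤ w i * a i := by
          intro i _
          calc -(|w i₀| * |a i|) ≤ -(|w i| * |a i|) := by
                have := hi₀ i (mem_univ i)
                nlinarith [abs_nonneg (a i)]
            _ ≤ w i * a i := by
                rw [← abs_mul]; exact neg_abs_le _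
        calc -(β * |w i₀|) ≤ -((∑ i, |a i|) * |w i₀|) := by
              nlinarith [abs_nonneg (w i₀)]
          _ = ∑ i, -(|w i₀| * |a i|) := by
              rw [Finset.sum_mul, ← Finset.sum_neg_distrib]
              exact Finset.sum_congr rfl fun i _ => by ring
          _ ≤ ∑ i, w i * a i := Finset.sum_le_sum hineq
      linarith
    refine ⟨fun j => if j = k then p else g j, ?_⟩
    rw [Finset.sum_range_succ]
    have hsum : ∑ j ∈ Finset.range k, vecOf d β (if j = k then p else g j) = S := by
      apply Finset.sum_congr rfl
      intro j hj
      rw [if_neg (Nat.ne_of_lt (Finset.mem_range.1 hj))]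
    rw [hsum]
    simp only [if_pos rfl]
    set v := vecOf d β p with hv
    have hva : ‖v - a‖^2 = β^2 - 2*⟪a, v⟫ + ‖a‖^2 := by
      rw [norm_sub_sq_real v a, vecOf_norm hβ, real_inner_comm a v]
    have hexp : (S + v) - ((k:ℝ)+1) • a = u + (v - a) := by
      rw [hu]; module
    have : ‖(S + v) - ((k:ℝ)+1) • a‖^2 ≤ ‖u‖^2 + (β^2 - ‖a‖^2) := by
      rw [hexp, norm_add_sq_real]
      have hinner : ⟪u, v - a⟫ = ⟪w, v⟫ - ⟪w, a⟫ + ⟪a, v⟫ - ‖a‖^2 := by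
        have hu' : u = w + a := by rw [hw]; abel
        rw [hu', inner_add_left, inner_sub_right, inner_sub_right,
          real_inner_self_eq_norm_sq]
        ring
      rw [hva, hinner]
      have := hkey
      linarith
    push_cast
    calc ‖(S + v) - ((k:ℝ)+1) • a‖^2 ≤ ‖u‖^2 + (β^2 - ‖a‖^2) := this
      _ ≤ (k:ℝ) * (β^2 - ‖a‖^2) + (β^2 - ‖a‖^2) := by rw [hu]; linarith [hg]
      _ = ((k:ℝ)+1) * (β^2 - ‖a‖^2) := by ring


set_option maxHeartbeats 1000000 in

/-- The `ε`-covering number (in the Euclidean norm) of the `ℓ¹` ball of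
radius `β` in `ℝ^d` satisfies `log N ≤ ⌈β²/ε²⌉ · log(2d)`: there is a finite
set of centers covering the ball with Euclidean `ε`-balls whose cardinality
`N` satisfies this bound. -/
theorem l1_ball_covering_number {d : ℕ} (hd : 0 < d) (β ε : ℝ)
    (hβ : 0 < β) (hε : 0 < ε) :
    ∃ C : Finset (EuclideanSpace ℝ (Fin d)),
      ({a : EuclideanSpace ℝ (Fin d) | ∑ i, |a i| ≤ β} ⊆
        ⋃ c ∈ C, Metric.ball c ε) ∧
      0 < C.card ∧
      Real.log C.card ≤ (⌈β ^ 2 / ε ^ 2⌉₊ : ℝ) * Real.log (2 * d) := by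
  classical
  haveI : Nonempty (Fin d) := ⟨⟨0, hd⟩⟩
  set k := ⌈β ^ 2 / ε ^ 2⌉₊ with hkdef
  have hk1 : 1 ≤ k := Nat.one_le_iff_ne_zero.2 (by
    simp only [hkdef, ne_eq, Nat.ceil_eq_zero, not_le]
    positivity)
  have hkε : β ^ 2 ≤ (k : ℝ) * ε ^ 2 := by
    have h1 : β ^ 2 / ε ^ 2 ≤ (k : ℝ) := Nat.le_ceil _
    have h2 : (0:ℝ) < ε ^ 2 := by positivity
    rw [div_le_iff₀ h2] at h1
    linarith
  have hlog2d : (1:ℝ) ≤ 2 * d := by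
    have : (1:ℝ) ≤ (d:ℝ) := by exact_mod_cast hd
    linarith
  rcases eq_or_lt_of_le hk1 with hk1' | hk2
  · -- k = 1 : use centers (β/2)·(±eᵢ)
    have hβε : β ≤ ε := by
      have h1 : β ^ 2 / ε ^ 2 ≤ (1:ℝ) := by
        have := Nat.le_ceil (β ^ 2 / ε ^ 2)
        rw [← hkdef, ← hk1'] at this
        -- this : β^2/ε^2 ≤ 1 ... wrong direction; derive from ceil ≤ 1
        have h2 : ⌈β ^ 2 / ε ^ 2⌉₊ ≤ 1 := le_of_eq hk1'.symm
        rw [Nat.ceil_le] at h2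
        exact_mod_cast h2
      have h2 : β ^ 2 ≤ ε ^ 2 := by
        rw [div_le_one (by positivity)] at h1
        exact h1
      nlinarith
    refine ⟨(Finset.univ : Finset (Fin d × Bool)).image
      (fun p => (2:ℝ)⁻¹ • vecOf d β p), ?_, ?_, ?_⟩
    · intro a haset
      simp only [Set.mem_setOf_eq] at haset
      obtain ⟨i₀, hi₀⟩ := maxcoord hd β a haset
      set b : Bool := decide (0 ≤ a i₀) with hb
      set c := (2:ℝ)⁻¹ • vecOf d β (i₀, b) with hc
      have hmem : c ∈ (Finset.univ : Finset (Fin d × Bool)).image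
          (fun p => (2:ℝ)⁻¹ • vecOf d β p) :=
        Finset.mem_image.2 ⟨(i₀, b), mem_univ _, rfl⟩
      refine Set.mem_iUnion₂.2 ⟨c, hmem, ?_⟩
      rw [Metric.mem_ball, dist_eq_norm]
      have hiv : ⟪a, vecOf d β (i₀, b)⟫ = β * |a i₀| := by
        rw [vecOf_inner]
        simp only [hb, decide_eq_true_eq]
        rcases le_or_gt 0 (a i₀) with h | h
        · rw [if_pos h, abs_of_nonneg h]
        · rw [if_neg (not_le.2 h), abs_of_neg h]; ring
      have hdist : ‖a - c‖ ^ 2 ≤ β ^ 2 / 4 := by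
        rw [norm_sub_sq_real a c]
        have h1 : ⟪a, c⟫ = (2:ℝ)⁻¹ * (β * |a i₀|) := by
          rw [hc, real_inner_smul_right, hiv]
        have h2 : ‖c‖ = (2:ℝ)⁻¹ * β := by
          rw [hc, norm_smul, vecOf_norm hβ.le]
          norm_num
        rw [h1, h2]
        nlinarith
      have : ‖a - c‖ ^ 2 < ε ^ 2 := by nlinarith
      exact lt_of_pow_lt_pow_left₀ 2 hε.le this
    · rw [Finset.card_pos]
      exact Finset.Nonempty.image ⟨(⟨0, hd⟩, true), mem_univ _⟩ _
    · have hcard : ((Finset.univ : Finset (Fin d × Bool)).image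
          (fun p => (2:ℝ)⁻¹ • vecOf d β p)).card ≤ 2 * d := by
        calc _ ≤ (Finset.univ : Finset (Fin d × Bool)).card := Finset.card_image_le
          _ = 2 * d := by simp [Finset.card_univ, mul_comm]
      have hpos : (0:ℝ) < ((Finset.univ : Finset (Fin d × Bool)).image
          (fun p => (2:ℝ)⁻¹ • vecOf d β p)).card := by
        have := Finset.card_pos.2 (Finset.Nonempty.image ⟨((⟨0, hd⟩ : Fin d), true), mem_univ _⟩
          (fun p => (2:ℝ)⁻¹ • vecOf d β p))
        exact_mod_cast this
      calc Real.log _ ≤ Real.log (2 * d) := by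
            apply Real.log_le_log hpos
            exact_mod_cast hcard
        _ = (k:ℝ) * Real.log (2 * d) := by rw [← hk1']; norm_num
  · -- 2 ≤ k : Maurey centers
    set C := (Finset.univ : Finset (Fin k → Fin d × Bool)).image
      (fun f => (k:ℝ)⁻¹ • ∑ j, vecOf d β (f j)) with hC
    have hk0 : ((k:ℝ)) ≠ 0 := by positivity
    have hkr2 : (2:ℝ) ≤ (k:ℝ) := by exact_mod_cast hk2
    refine ⟨C, ?_, ?_, ?_⟩
    · intro a haset
      simp only [Set.mem_setOf_eq] at haset
      by_cases ha0 : a = 0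
      · -- a = 0 : alternating center
        set i₀ : Fin d := ⟨0, hd⟩ with hi₀
        set f : Fin k → Fin d × Bool := fun j => (i₀, decide (Even (j:ℕ))) with hf
        set c := (k:ℝ)⁻¹ • ∑ j, vecOf d β (f j) with hc
        have hmem : c ∈ C := Finset.mem_image.2 ⟨f, mem_univ _, rfl⟩
        refine Set.mem_iUnion₂.2 ⟨c, hmem, ?_⟩
        rw [Metric.mem_ball, dist_eq_norm, ha0, zero_sub, norm_neg]
        have hsum : ∑ j, vecOf d β (f j)
            = ((∑ j ∈ Finset.range k, (-1:ℝ)^j) * β) • EuclideanSpace.single i₀ (1:ℝ) := by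
          rw [show (∑ j, vecOf d β (f j))
              = ∑ j ∈ Finset.range k, ((-1:ℝ)^j * β) • EuclideanSpace.single i₀ (1:ℝ) from ?_,
            ← Finset.sum_smul, ← Finset.sum_mul]
          rw [← Fin.sum_univ_eq_sum_range
            (fun j => ((-1:ℝ)^j * β) • EuclideanSpace.single i₀ (1:ℝ)) k]
          refine Finset.sum_congr rfl fun j _ => ?_
          by_cases hevj : Even (j:ℕ)
          · simp [vecOf, hf, hevj, hevj.neg_one_pow]
          · simp [vecOf, hf, hevj, (Nat.not_even_iff_odd.1 hevj).neg_one_pow]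
        rw [hc, hsum, neg_one_geom_sum]
        by_cases hek : Even k
        · simp [hek]
          positivity
        · rw [if_neg hek]
          have hnorm : ‖(k:ℝ)⁻¹ • ((1:ℝ) * β) • EuclideanSpace.single i₀ (1:ℝ)‖
              = (k:ℝ)⁻¹ * β := by
            rw [norm_smul, norm_smul, EuclideanSpace.norm_single]
            simp [abs_of_nonneg hβ.le, abs_of_nonneg (by positivity : (0:ℝ) ≤ (k:ℝ)⁻¹)]
          rw [hnorm]
          have hsq : ((k:ℝ)⁻¹ * β)^2 < ε^2 := by
            have h1 : ((k:ℝ)⁻¹ * β)^2 = β^2 / (k:ℝ)^2 := by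
              field_simp
            rw [h1]
            have h2 : β^2 / (k:ℝ)^2 ≤ ((k:ℝ) * ε^2) / (k:ℝ)^2 := by
              apply div_le_div_of_nonneg_right hkε
              positivity
            have h3 : ((k:ℝ) * ε^2) / (k:ℝ)^2 = ε^2 / (k:ℝ) := by
              field_simp
            have h4 : ε^2 / (k:ℝ) < ε^2 := by
              rw [div_lt_iff₀ (by positivity)]
              nlinarith
            linarith
          exact lt_of_pow_lt_pow_left₀ 2 hε.le hsq
      · -- a ≠ 0 : greedy approximation
        obtain ⟨g, hg⟩ := greedy hd β hβ.le a haset k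
        set S := ∑ j ∈ Finset.range k, vecOf d β (g j) with hS
        set f : Fin k → Fin d × Bool := fun j => g (j:ℕ) with hf
        set c := (k:ℝ)⁻¹ • ∑ j, vecOf d β (f j) with hc
        have hmem : c ∈ C := Finset.mem_image.2 ⟨f, mem_univ _, rfl⟩
        refine Set.mem_iUnion₂.2 ⟨c, hmem, ?_⟩
        rw [Metric.mem_ball, dist_eq_norm]
        have hsum : ∑ j, vecOf d β (f j) = S := by
          rw [hS, hf, ← Fin.sum_univ_eq_sum_range (fun j => vecOf d β (g j)) k]
        have hca : a - c = -((k:ℝ)⁻¹ • (S - (k:ℝ) • a)) := by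
          rw [hc, hsum, smul_sub, smul_smul, inv_mul_cancel₀ hk0, one_smul]
          abel
        have hna : 0 < ‖a‖ := norm_pos_iff.2 ha0
        have hsq : ‖a - c‖^2 < ε^2 := by
          rw [hca, norm_neg, norm_smul]
          have h0 : ‖(k:ℝ)⁻¹‖ = (k:ℝ)⁻¹ := by
            rw [Real.norm_eq_abs, abs_of_nonneg (by positivity)]
          rw [h0, mul_pow]
          have h1 : ((k:ℝ)⁻¹)^2 * ‖S - (k:ℝ) • a‖^2
              ≤ ((k:ℝ)⁻¹)^2 * ((k:ℝ) * (β^2 - ‖a‖^2)) := by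
            apply mul_le_mul_of_nonneg_left hg (by positivity)
          have h2 : ((k:ℝ)⁻¹)^2 * ((k:ℝ) * (β^2 - ‖a‖^2)) = (β^2 - ‖a‖^2) / (k:ℝ) := by
            field_simp
          have h3 : (β^2 - ‖a‖^2) / (k:ℝ) < β^2 / (k:ℝ) := by
            gcongr
            nlinarith
          have h4 : β^2 / (k:ℝ) ≤ ε^2 := by
            rw [div_le_iff₀ (by positivity)]
            nlinarith
          linarith
        exact lt_of_pow_lt_pow_left₀ 2 hε.le hsq
    · rw [hC, Finset.card_pos]
      exact Finset.Nonempty.image ⟨fun _ => (⟨0, hd⟩, true), mem_univ _⟩ _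
    · have hcard : C.card ≤ (2 * d)^k := by
        calc C.card ≤ (Finset.univ : Finset (Fin k → Fin d × Bool)).card :=
              Finset.card_image_le
          _ = (2 * d)^k := by
              rw [Finset.card_univ, Fintype.card_fun, Fintype.card_prod,
                Fintype.card_fin, Fintype.card_fin, Fintype.card_bool, Nat.mul_comm]
      have hpos : (0:ℝ) < C.card := by
        have : 0 < C.card := Finset.card_pos.2
          (Finset.Nonempty.image ⟨fun _ => ((⟨0, hd⟩ : Fin d), true), mem_univ _⟩ _)
        exact_mod_cast this
      calc Real.log C.card ≤ Real.log ((2 * (d:ℝ))^k) := by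
            apply Real.log_le_log hpos
            have : ((2 * d)^k : ℕ) = ((2 * (d:ℝ))^k : ℝ) := by push_cast; ring
            rw [← this]
            exact_mod_cast hcard
        _ = (k:ℝ) * Real.log (2 * (d:ℝ)) := Real.log_pow (2 * (d:ℝ)) k
end

section
/- (Telescoping layer-perturbation bound for deep networks) Let F_A(x) = σ_L(A^{(L)} σ_{L-1}(⋯ σ_1(A^{(1)} x) ⋯)) where each σ_l is ρ_l-Lipschitz with σ_l(0) = 0 and ‖A^{(l)}‖_σ ≤ s_l, ‖Ã^{(l)}‖_σ ≤ s_l. Then for any x with ‖x‖₂ ≤ B_x, ‖F_A(x) - F_Ã(x)‖₂ ≤ B_x · (∏_{m=1}^L ρ_m s_m) · Σ_{l=1}^L ‖A^{(l)} - Ã^{(l)}‖_σ / s_l. -/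
/-- A fully connected network with linear layers `A l` and activations `σ l`:
`net A σ L x = σ_{L-1}(A_{L-1}( ⋯ σ_0(A_0 x) ⋯ ))`. -/
def net {E : ℕ → Type*} [∀ l, NormedAddCommGroup (E l)]
    [∀ l, NormedSpace ℝ (E l)]
    (A : ∀ l, E l →L[ℝ] E (l + 1)) (σ : ∀ l, E (l + 1) → E (l + 1)) :
    ∀ L, E 0 → E L
  | 0 => id
  | (L + 1) => fun x => σ L (A L (net A σ L x))

lemma net_norm_le {E : ℕ → Type*} [∀ l, NormedAddCommGroup (E l)]
    [∀ l, NormedSpace ℝ (E l)] (L : ℕ)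
    (A : ∀ l, E l →L[ℝ] E (l + 1)) (σ : ∀ l, E (l + 1) → E (l + 1))
    (ρ s : ℕ → ℝ) (hρ : ∀ l, 0 ≤ ρ l)
    (hσ : ∀ l, ∀ u v, ‖σ l u - σ l v‖ ≤ ρ l * ‖u - v‖)
    (hσ0 : ∀ l, σ l 0 = 0)
    (hA : ∀ l, ‖A l‖ ≤ s l) (x : E 0) :
    ‖net A σ L x‖ ≤ ‖x‖ * ∏ m ∈ Finset.range L, ρ m * s m := by
  induction L with
  | zero => simp [net]
  | succ L ih =>
      have h1 : ‖σ L (A L (net A σ L x))‖ ≤ ρ L * ‖A L (net A σ L x)‖ := by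
        have := hσ L (A L (net A σ L x)) 0
        simpa [hσ0 L] using this
      have hρL : 0 ≤ ρ L := hρ L
      have h2 : ‖A L (net A σ L x)‖ ≤ s L * ‖net A σ L x‖ :=
        le_trans ((A L).le_opNorm _) (by
          have := norm_nonneg (net A σ L x)
          nlinarith [hA L, (A L).opNorm_nonneg])
      calc ‖net A σ (L + 1) x‖ = ‖σ L (A L (net A σ L x))‖ := rfl
        _ ≤ ρ L * (s L * ‖net A σ L x‖) := by
            refine h1.trans ?_
            exact mul_le_mul_of_nonneg_left h2 hρL
        _ ≤ ρ L * (s L * (‖x‖ * ∏ m ∈ Finset.range L, ρ m * s m)) := by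
            have hsL : 0 ≤ s L := le_trans (norm_nonneg _) (hA L)
            exact mul_le_mul_of_nonneg_left (mul_le_mul_of_nonneg_left ih hsL) hρL
        _ = ‖x‖ * ∏ m ∈ Finset.range (L + 1), ρ m * s m := by
            rw [Finset.prod_range_succ]; ring

/-- Telescoping layer-perturbation bound for deep networks: if each
activation `σ l` is `ρ l`-Lipschitz and fixes `0`, and all weight matrices of
both networks have spectral (operator) norm at most `s l`, then for `‖x‖ ≤ Bx`,
`‖F_A(x) - F_Ã(x)‖ ≤ Bx · (∏ ρ_m s_m) · Σ_l ‖A^{(l)} - Ã^{(l)}‖_σ / s_l`. -/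
theorem deep_network_perturbation_bound {E : ℕ → Type*}
    [∀ l, NormedAddCommGroup (E l)] [∀ l, NormedSpace ℝ (E l)] (L : ℕ)
    (A A' : ∀ l, E l →L[ℝ] E (l + 1)) (σ : ∀ l, E (l + 1) → E (l + 1))
    (ρ s : ℕ → ℝ) (hs : ∀ l, 0 < s l) (hρ : ∀ l, 0 ≤ ρ l)
    (hσ : ∀ l, ∀ u v, ‖σ l u - σ l v‖ ≤ ρ l * ‖u - v‖)
    (hσ0 : ∀ l, σ l 0 = 0)
    (hA : ∀ l, ‖A l‖ ≤ s l) (hA' : ∀ l, ‖A' l‖ ≤ s l)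
    (x : E 0) (Bx : ℝ) (hBx0 : 0 < Bx) (hBx : ‖x‖ ≤ Bx) :
    ‖net A σ L x - net A' σ L x‖
      ≤ Bx * (∏ m ∈ Finset.range L, ρ m * s m)
          * ∑ l ∈ Finset.range L, ‖A l - A' l‖ / s l := by
  induction L with
  | zero => simp [net]
  | succ L ih =>
      set u := net A σ L x with hu
      set u' := net A' σ L x with hu'
      set P := ∏ m ∈ Finset.range L, ρ m * s m with hP
      set S := ∑ l ∈ Finset.range L, ‖A l - A' l‖ / s l with hS
      have hPnn : 0 ≤ P := Finset.prod_nonneg fun m _ => mul_nonneg (hρ m) (hs m).le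
      have hu'le : ‖u'‖ ≤ Bx * P :=
        (net_norm_le L A' σ ρ s hρ hσ hσ0 hA' x).trans
          (mul_le_mul_of_nonneg_right hBx hPnn)
      have hstep : ‖σ L (A L u) - σ L (A' L u')‖
          ≤ ρ L * (‖A L‖ * ‖u - u'‖ + ‖A L - A' L‖ * ‖u'‖) := by
        refine (hσ L _ _).trans (mul_le_mul_of_nonneg_left ?_ (hρ L))
        have : A L u - A' L u' = A L (u - u') + (A L - A' L) u' := by
          simp only [map_sub, ContinuousLinearMap.sub_apply]; abel
        rw [this]
        exact (norm_add_le _ _).trans (add_le_add ((A L).le_opNorm _)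
          ((A L - A' L).le_opNorm _))
      have hmain : ‖A L‖ * ‖u - u'‖ + ‖A L - A' L‖ * ‖u'‖
          ≤ s L * (Bx * P * S) + ‖A L - A' L‖ * (Bx * P) := by
        refine add_le_add ?_ (mul_le_mul_of_nonneg_left hu'le (norm_nonneg _))
        exact mul_le_mul (hA L) ih (norm_nonneg _) (hs L).le
      have hgoal : ρ L * (s L * (Bx * P * S) + ‖A L - A' L‖ * (Bx * P))
          = Bx * (P * (ρ L * s L)) * (S + ‖A L - A' L‖ / s L) := by
        have := (hs L).ne'
        field_simp
      calc ‖net A σ (L + 1) x - net A' σ (L + 1) x‖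
          = ‖σ L (A L u) - σ L (A' L u')‖ := rfl
        _ ≤ ρ L * (s L * (Bx * P * S) + ‖A L - A' L‖ * (Bx * P)) :=
            hstep.trans (mul_le_mul_of_nonneg_left hmain (hρ L))
        _ = Bx * (P * (ρ L * s L)) * (S + ‖A L - A' L‖ / s L) := hgoal
        _ = Bx * (∏ m ∈ Finset.range (L + 1), ρ m * s m)
            * ∑ l ∈ Finset.range (L + 1), ‖A l - A' l‖ / s l := by
            rw [Finset.prod_range_succ, Finset.sum_range_succ]
end
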